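/- Define T_n(x) = Σ_{k≥0} T(n,k) x^k ∈ ℚ[x] for n ≥ 1, and T_0(x) = 1, where T(n,k) is the number of permutations of [n] with exactly k exterior peaks. Then for every n ≥ 1, T_n(x) = Σ_{j=1}^{n} C(n,j) (-1)^{j-1} (1-x)^{⌊j/2⌋} T_{n-j}(x), where C(n,j) is the binomial coefficient. -/

import Mathlib

/-- The number of exterior peaks of a word given as a list: indices `i` (1-based) with
`1 < i < n` and `l_{i-1} < l_i > l_{i+1}`, or `i = 1` and `l_1 > l_2`. -/
def extPeaksList {α : Type*} [LinearOrder α] (l : List α) : ℕ :=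
  ((l.zip (l.tail.zip l.tail.tail)).countP
      fun p => decide (p.1 < p.2.1 ∧ p.2.2 < p.2.1)) +
    (match l with
     | a :: b :: _ => if b < a then 1 else 0
     | _ => 0)

/-- The number of exterior peaks of a permutation of `[n]`. -/
def extPeaks {n : ℕ} (π : Equiv.Perm (Fin n)) : ℕ :=
  extPeaksList (List.ofFn fun i => (π i : ℕ))

/-- `extPeakCount n k` is the number of permutations of `[n]` with exactly `k` exterior peaks. -/
noncomputable def extPeakCount (n k : ℕ) : ℕ :=
  Nat.card {π : Equiv.Perm (Fin n) // extPeaks π = k}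

/-- `T_n(x) = ∑_{k≥0} T(n,k) xᵏ` for `n ≥ 1` and `T_0(x) = 1`.  (All terms with `k > n`
vanish, so the sum over `k ∈ range (n+1)` captures the full sum over `k ≥ 0`.) -/
noncomputable def Tpoly : ℕ → Polynomial ℚ
  | 0 => 1
  | (n + 1) => ∑ k ∈ Finset.range (n + 2),
      (extPeakCount (n + 1) k : Polynomial ℚ) * Polynomial.X ^ k


def isPeak (l : List ℕ) (i : ℕ) : Prop :=
  i + 1 < l.length ∧ l.getD (i+1) 0 < l.getD i 0 ∧ (i = 0 ∨ l.getD (i-1) 0 < l.getD i 0)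

instance instDecIsPeak (l : List ℕ) (i : ℕ) : Decidable (isPeak l i) := by
  unfold isPeak; infer_instance

def peakSet (l : List ℕ) : Finset ℕ := (Finset.range l.length).filter (isPeak l)

lemma countP_eq_sum_getD {α : Type*} (p : α → Bool) (d : α) : ∀ (l : List α),
    l.countP p = ∑ i ∈ Finset.range l.length, if p (l.getD i d) then 1 else 0 := by
  intro l
  induction l with
  | nil => simp
  | cons a l ih =>
    rw [List.countP_cons, List.length_cons, Finset.sum_range_succ']
    simp only [List.getD_cons_succ, List.getD_cons_zero, ih]

lemma peakSet_card_eq_sum (l : List ℕ) :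
    (peakSet l).card = ∑ i ∈ Finset.range l.length, if isPeak l i then 1 else 0 := by
  rw [peakSet, Finset.card_filter]

lemma extPeaksList_eq_card (l : List ℕ) : extPeaksList l = (peakSet l).card := by
  match l with
  | [] => simp [extPeaksList, peakSet, isPeak]
  | [a] =>
    simp [extPeaksList, peakSet, Finset.filter_singleton, isPeak]
  | a :: b :: t =>
    set l := a :: b :: t with hl
    set m := t.length with hm
    have hL : l.length = m + 2 := by simp [hl, hm]
    have hZlen : (l.zip (l.tail.zip l.tail.tail)).length = m := by
      simp [List.length_zip]; omega
    rw [peakSet_card_eq_sum, extPeaksList, countP_eq_sum_getD _ (0, (0, 0)), hZlen, hL]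
    rw [Finset.sum_range_succ' _ (m+1), Finset.sum_range_succ _ m]
    have h0 : isPeak l 0 ↔ b < a := by
      simp [isPeak, hl]
    have hlast : ¬ isPeak l (m + 1) := by
      simp [isPeak, hL]
    have hmid : ∀ i ∈ Finset.range m,
        (if (fun p : ℕ × ℕ × ℕ => decide (p.1 < p.2.1 ∧ p.2.2 < p.2.1))
            ((l.zip (l.tail.zip l.tail.tail)).getD i (0, (0, 0))) = true then 1 else 0)
          = if isPeak l (i+1) then 1 else 0 := by
      intro i hi
      rw [Finset.mem_range] at hi
      have h1 : i < (l.zip (l.tail.zip l.tail.tail)).length := by omega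
      rw [List.getD_eq_getElem _ _ h1]
      have h2 : i < l.length := by omega
      have h3 : i + 1 < l.length := by omega
      have h4 : i + 2 < l.length := by omega
      simp only [List.getElem_zip, List.getElem_tail]
      have e0 : l[i] = l.getD i 0 := (List.getD_eq_getElem _ _ h2).symm
      have e1 : l[i+1] = l.getD (i+1) 0 := (List.getD_eq_getElem _ _ h3).symm
      have e2 : l[i+1+1] = l.getD (i+2) 0 := (List.getD_eq_getElem _ _ h4).symm
      rw [e0, e1, e2]
      have hiff : isPeak l (i+1) ↔ (l.getD i 0 < l.getD (i+1) 0 ∧ l.getD (i+2) 0 < l.getD (i+1) 0) := by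
        unfold isPeak
        constructor
        · rintro ⟨_, h5, h6⟩
          exact ⟨by simpa using h6.resolve_left (by omega), by simpa using h5⟩
        · rintro ⟨h5, h6⟩
          exact ⟨by omega, by simpa using h6, Or.inr (by simpa using h5)⟩
      simp only [decide_eq_true_eq]
      simp [hiff]
    rw [Finset.sum_congr rfl hmid]
    simp only [hlast, if_false, h0]
    omega

lemma isPeak_def (l : List ℕ) (i : ℕ) : isPeak l i ↔
    i + 1 < l.length ∧ l.getD (i+1) 0 < l.getD i 0 ∧ (i = 0 ∨ l.getD (i-1) 0 < l.getD i 0) :=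
  Iff.rfl

lemma isPeak_insertIdx (w : List ℕ) (M p : ℕ) (hp : p ≤ w.length) (hM : ∀ x ∈ w, x < M)
    (q : ℕ) :
    isPeak (w.insertIdx p M) q ↔
      (isPeak w q ∧ q + 1 < p) ∨ (q = p ∧ p < w.length) ∨
        (∃ i, isPeak w i ∧ p < i ∧ q = i + 1) := by
  set z := w.insertIdx p M with hz
  set L := w.length with hL
  have hzlen : z.length = L + 1 := List.length_insertIdx_of_le_length hp M
  have hMw : ∀ i, i < L → w.getD i 0 < M := by
    intro i hi
    rw [List.getD_eq_getElem _ _ hi]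
    exact hM _ (List.getElem_mem _)
  have gq : ∀ r, r < p → z.getD r 0 = w.getD r 0 := by
    intro r hr
    have h1 : r < L := lt_of_lt_of_le hr hp
    rw [List.getD_eq_getElem _ _ (by omega : r < z.length),
      List.getD_eq_getElem _ _ h1]
    exact List.getElem_insertIdx_of_lt hr (by omega : r < z.length)
  have gp : z.getD p 0 = M := by
    rw [List.getD_eq_getElem _ _ (by omega : p < z.length)]
    exact List.getElem_insertIdx_self (by omega : p < z.length)
  have gs : ∀ i, p ≤ i → i < L → z.getD (i+1) 0 = w.getD i 0 := by
    intro i h1 h2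
    obtain ⟨k, rfl⟩ : ∃ k, i = p + k := ⟨i - p, by omega⟩
    rw [List.getD_eq_getElem _ _ (by omega : p + k + 1 < z.length),
      List.getD_eq_getElem _ _ h2]
    exact List.getElem_insertIdx_add_succ w M p k h2
  simp only [isPeak_def, hzlen]
  rcases lt_trichotomy q p with hqp | heq | hqp
  case inr.inl =>
    subst heq
    constructor
    · rintro ⟨hb, _, _⟩
      exact Or.inr (Or.inl ⟨rfl, by omega⟩)
    · rintro (⟨_, h⟩ | ⟨_, hpL⟩ | ⟨i, _, hpi, he⟩)
      · omega
      · refine ⟨by omega, ?_, ?_⟩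
        · rw [gp, gs q le_rfl hpL]
          exact hMw q hpL
        · rcases Nat.eq_zero_or_pos q with h0 | h0
          · exact Or.inl h0
          · refine Or.inr ?_
            rw [gp, gq (q-1) (by omega)]
            exact hMw (q-1) (by omega)
      · omega
  · rcases eq_or_lt_of_le (show q + 1 ≤ p from hqp) with he | hlt
    · constructor
      · rintro ⟨hb, hpk, _⟩
        exfalso
        rw [he, gp, gq q hqp] at hpk
        have := hMw q (by omega)
        omega
      · rintro (⟨_, h⟩ | ⟨h, _⟩ | ⟨i, _, hpi, rfl⟩) <;> omega
    · rw [gq q hqp, gq (q+1) hlt]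
      have hq1L : q + 1 < L := by omega
      constructor
      · rintro ⟨_, h2, h3⟩
        refine Or.inl ⟨⟨by omega, h2, ?_⟩, hlt⟩
        rcases h3 with h | h
        · exact Or.inl h
        · exact Or.inr (by rwa [gq (q-1) (by omega)] at h)
      · rintro (⟨⟨_, h2, h3⟩, _⟩ | ⟨rfl, _⟩ | ⟨i, _, hpi, rfl⟩)
        · refine ⟨by omega, h2, ?_⟩
          rcases h3 with h | h
          · exact Or.inl h
          · exact Or.inr (by rwa [gq (q-1) (by omega)])
        · omega
        · omega
  · rcases eq_or_lt_of_le (show p + 1 ≤ q from hqp) with he | hlt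
    · constructor
      · rintro ⟨hb, hr, hcl⟩
        exfalso
        rcases hcl with h0 | hleft
        · omega
        · rw [show q - 1 = p by omega, gp] at hleft
          rw [← he, gs p le_rfl (by omega)] at hleft
          have := hMw p (by omega)
          omega
      · rintro (⟨_, h⟩ | ⟨h, _⟩ | ⟨i, _, hpi, he2⟩) <;> omega
    · constructor
      · rintro ⟨hb, hr, hcl⟩
        refine Or.inr (Or.inr ⟨q - 1, ?_, by omega, by omega⟩)
        have e1 := gs q (by omega) (by omega)
        have e2 := gs (q-1) (by omega) (by omega)
        rw [show q - 1 + 1 = q by omega] at e2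
        have e3 := gs (q-2) (by omega) (by omega)
        rw [show q - 2 + 1 = q - 1 by omega] at e3
        rw [e1, e2] at hr
        refine ⟨by omega, by rwa [show q - 1 + 1 = q by omega], Or.inr ?_⟩
        rcases hcl with h0 | hleft
        · omega
        · rw [e3, e2] at hleft
          rwa [show q - 1 - 1 = q - 2 by omega]
      · rintro (⟨h, hh⟩ | ⟨h, _⟩ | ⟨i, ⟨hb, hr, hcl⟩, hpi, rfl⟩)
        · omega
        · omega
        · have e1 := gs (i+1) (by omega) (by omega)
          have e2 := gs i (by omega) (by omega)
          have e3 := gs (i-1) (by omega) (by omega)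
          rw [show i - 1 + 1 = i by omega] at e3
          refine ⟨by omega, by rw [e1, e2]; exact hr, Or.inr ?_⟩
          rw [show i + 1 - 1 = i from rfl, e3, e2]
          rcases hcl with h0 | hleft
          · omega
          · rwa [show i - 1 = i - 1 from rfl]

lemma mem_peakSet {l : List ℕ} {i : ℕ} : i ∈ peakSet l ↔ isPeak l i := by
  unfold peakSet
  simp only [Finset.mem_filter, Finset.mem_range]
  exact ⟨fun h => h.2, fun h => ⟨by have := ((isPeak_def l i).mp h).1; omega, h⟩⟩

lemma peak_lt {l : List ℕ} {i : ℕ} (h : isPeak l i) : i + 1 < l.length :=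
  ((isPeak_def l i).mp h).1

lemma peak_not_adjacent {l : List ℕ} {i : ℕ} (h : isPeak l i) : ¬ isPeak l (i+1) := by
  rw [isPeak_def] at h
  rw [isPeak_def]
  rintro ⟨hb, hr, hcl⟩
  obtain ⟨hb', hr', hcl'⟩ := h
  rcases hcl with h0 | hleft
  · omega
  · rw [show i + 1 - 1 = i from rfl] at hleft; omega

lemma extPeaks_insertIdx (w : List ℕ) (M p : ℕ) (hp : p ≤ w.length) (hM : ∀ x ∈ w, x < M) :
    extPeaksList (w.insertIdx p M) =
      if p ∈ insert w.length (peakSet w ∪ (peakSet w).image (· + 1)) then (peakSet w).card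
      else (peakSet w).card + 1 := by
  classical
  rw [extPeaksList_eq_card]
  set L := w.length with hL
  set pw := peakSet w with hpw
  set A := pw.filter (fun i => i + 1 < p) with hA
  set C := pw.filter (fun i => p < i) with hC
  set E := pw.filter (fun i => p ≤ i + 1 ∧ i ≤ p) with hE
  have hpeakmem : ∀ i, i ∈ pw → i + 1 < L := fun i hi => peak_lt (mem_peakSet.mp hi)
  have hU : pw = A ∪ E ∪ C := by
    ext i
    simp only [hA, hE, hC, Finset.mem_union, Finset.mem_filter]
    constructor
    · intro h
      by_cases h1 : i + 1 < p
      · exact Or.inl (Or.inl ⟨h, h1⟩)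
      · by_cases h2 : p < i
        · exact Or.inr ⟨h, h2⟩
        · exact Or.inl (Or.inr ⟨h, by omega, by omega⟩)
    · rintro ((⟨h, _⟩ | ⟨h, _⟩) | ⟨h, _⟩) <;> exact h
  have hdAE : Disjoint A E := by
    rw [Finset.disjoint_left]
    intro i hi hi'
    rw [hA, Finset.mem_filter] at hi
    rw [hE, Finset.mem_filter] at hi'
    omega
  have hdAEC : Disjoint (A ∪ E) C := by
    rw [Finset.disjoint_left]
    intro i hi hi'
    rw [hC, Finset.mem_filter] at hi'
    rw [Finset.mem_union, hA, hE, Finset.mem_filter, Finset.mem_filter] at hi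
    rcases hi with h | h <;> omega
  have hcards : A.card + E.card + C.card = pw.card := by
    rw [hU, Finset.card_union_of_disjoint hdAEC, Finset.card_union_of_disjoint hdAE]
  -- the new peak set
  have hset : peakSet (w.insertIdx p M) =
      (A ∪ (if p < L then {p} else ∅)) ∪ C.image (· + 1) := by
    ext q
    simp only [mem_peakSet, isPeak_insertIdx w M p hp hM, Finset.mem_union, Finset.mem_filter,
      Finset.mem_image, hA, hC]
    by_cases hpL : p < L
    · simp only [if_pos hpL, Finset.mem_singleton]
      constructor
      · rintro (h | ⟨rfl, _⟩ | ⟨i, hi, hpi, rfl⟩)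
        · exact Or.inl (Or.inl ⟨mem_peakSet.mpr h.1, h.2⟩)
        · exact Or.inl (Or.inr rfl)
        · exact Or.inr ⟨i, ⟨mem_peakSet.mpr hi, hpi⟩, rfl⟩
      · rintro ((⟨hi, hlt⟩ | rfl) | ⟨i, ⟨hi, hpi⟩, rfl⟩)
        · exact Or.inl ⟨mem_peakSet.mp hi, hlt⟩
        · exact Or.inr (Or.inl ⟨rfl, hpL⟩)
        · exact Or.inr (Or.inr ⟨i, mem_peakSet.mp hi, hpi, rfl⟩)
    · simp only [if_neg hpL, Finset.notMem_empty, or_false]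
      constructor
      · rintro (h | ⟨rfl, h⟩ | ⟨i, hi, hpi, rfl⟩)
        · exact Or.inl ⟨mem_peakSet.mpr h.1, h.2⟩
        · exact absurd h hpL
        · exact Or.inr ⟨i, ⟨mem_peakSet.mpr hi, hpi⟩, rfl⟩
      · rintro (⟨hi, hlt⟩ | ⟨i, ⟨hi, hpi⟩, rfl⟩)
        · exact Or.inl ⟨mem_peakSet.mp hi, hlt⟩
        · exact Or.inr (Or.inr ⟨i, mem_peakSet.mp hi, hpi, rfl⟩)
  have hdisj1 : Disjoint A (if p < L then ({p} : Finset ℕ) else ∅) := by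
    split
    · rw [Finset.disjoint_left]
      intro i hi hi'
      rw [hA, Finset.mem_filter] at hi
      rw [Finset.mem_singleton] at hi'
      omega
    · exact Finset.disjoint_empty_right _
  have hdisj2 : Disjoint (A ∪ (if p < L then ({p} : Finset ℕ) else ∅)) (C.image (· + 1)) := by
    rw [Finset.disjoint_left]
    intro q hq hq'
    rw [Finset.mem_image] at hq'
    obtain ⟨i, hi, rfl⟩ := hq'
    rw [hC, Finset.mem_filter] at hi
    rw [Finset.mem_union] at hq
    rcases hq with h | h
    · rw [hA, Finset.mem_filter] at h; omega
    · revert h; split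
      · rw [Finset.mem_singleton]; omega
      · simp
  have hcardnew : (peakSet (w.insertIdx p M)).card =
      A.card + (if p < L then 1 else 0) + C.card := by
    rw [hset, Finset.card_union_of_disjoint hdisj2, Finset.card_union_of_disjoint hdisj1,
      Finset.card_image_of_injective _ (fun a b h => by omega)]
    congr 1
    split <;> simp
  rw [hcardnew]
  -- now case analysis on where p is
  by_cases hmem : p ∈ insert L (pw ∪ pw.image (· + 1))
  · rw [if_pos hmem]
    rw [Finset.mem_insert, Finset.mem_union, Finset.mem_image] at hmem
    rcases hmem with rfl | hp1 | ⟨i, hi, rfl⟩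
    · -- p = L : E empty, not p < L
      have hE0 : E = ∅ := by
        rw [hE, Finset.filter_eq_empty_iff]
        intro i hi
        have := hpeakmem i hi
        omega
      rw [if_neg (lt_irrefl L)]
      rw [hE0] at hcards
      simp at hcards ⊢
      omega
    · -- p itself is a peak
      have hEp : E = {p} := by
        ext i
        rw [hE, Finset.mem_filter, Finset.mem_singleton]
        constructor
        · rintro ⟨hi, h1, h2⟩
          rcases Nat.eq_or_lt_of_le h2 with rfl | hlt
          · rfl
          · exfalso
            have : i + 1 = p := by omega
            exact peak_not_adjacent (mem_peakSet.mp hi) (by rw [this]; exact mem_peakSet.mp hp1)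
        · rintro rfl
          exact ⟨hp1, by omega, le_rfl⟩
      have hpL : p < L := by have := hpeakmem p hp1; omega
      rw [if_pos hpL]
      rw [hEp] at hcards
      simp at hcards
      omega
    · -- p = i + 1 for a peak i
      have hEp : E = {i} := by
        ext j
        rw [hE, Finset.mem_filter, Finset.mem_singleton]
        constructor
        · rintro ⟨hj, h1, h2⟩
          rcases Nat.eq_or_lt_of_le h2 with rfl | hlt
          · exfalso
            exact peak_not_adjacent (mem_peakSet.mp hi) (mem_peakSet.mp hj)
          · omega
        · rintro rfl
          exact ⟨hi, by omega, by omega⟩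
      have hpL : i + 1 < L := hpeakmem i hi
      rw [if_pos hpL]
      rw [hEp] at hcards
      simp at hcards
      omega
  · rw [if_neg hmem]
    rw [Finset.mem_insert, Finset.mem_union, Finset.mem_image] at hmem
    push_neg at hmem
    obtain ⟨hne, hnp, hni⟩ := hmem
    have hE0 : E = ∅ := by
      rw [hE, Finset.filter_eq_empty_iff]
      intro i hi
      intro ⟨h1, h2⟩
      rcases Nat.eq_or_lt_of_le h2 with rfl | hlt
      · exact hnp hi
      · exact hni i hi (by omega)
    have hpL : p < L := by omega
    rw [if_pos hpL]
    rw [hE0] at hcards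
    simp at hcards
    omega

open Polynomial in
lemma sum_insertIdx_pow (w : List ℕ) (M : ℕ) (hM : ∀ x ∈ w, x < M) :
    2 * extPeaksList w ≤ w.length ∧
    ∑ p ∈ Finset.range (w.length + 1),
        (Polynomial.X : Polynomial ℚ) ^ extPeaksList (w.insertIdx p M) =
      ((2 * extPeaksList w + 1 : ℕ) : Polynomial ℚ) * Polynomial.X ^ extPeaksList w +
        ((w.length - 2 * extPeaksList w : ℕ) : Polynomial ℚ) *
          Polynomial.X ^ (extPeaksList w + 1) := by
  classical
  set L := w.length with hL
  set pw := peakSet w with hpw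
  have hpeakmem : ∀ i, i ∈ pw → i + 1 < L := fun i hi => peak_lt (mem_peakSet.mp hi)
  set K := insert L (pw ∪ pw.image (· + 1)) with hK
  have hdisj : Disjoint pw (pw.image (· + 1)) := by
    rw [Finset.disjoint_left]
    intro i hi hi'
    rw [Finset.mem_image] at hi'
    obtain ⟨j, hj, rfl⟩ := hi'
    exact peak_not_adjacent (mem_peakSet.mp hj) (mem_peakSet.mp hi)
  have hLnot : L ∉ pw ∪ pw.image (· + 1) := by
    rw [Finset.mem_union, Finset.mem_image]
    rintro (h | ⟨i, hi, heq⟩)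
    · have := hpeakmem L h; omega
    · have := hpeakmem i hi; omega
  have hKcard : K.card = 2 * pw.card + 1 := by
    rw [hK, Finset.card_insert_of_notMem hLnot, Finset.card_union_of_disjoint hdisj,
      Finset.card_image_of_injective _ (add_left_injective 1)]
    ring
  have hKsub : K ⊆ Finset.range (L + 1) := by
    intro i hi
    rw [hK, Finset.mem_insert, Finset.mem_union, Finset.mem_image] at hi
    rw [Finset.mem_range]
    rcases hi with rfl | h | ⟨j, hj, rfl⟩
    · omega
    · have := hpeakmem i h; omega
    · have := hpeakmem j hj; omega
  have hm : extPeaksList w = pw.card := extPeaksList_eq_card w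
  have h2m : 2 * pw.card ≤ L := by
    have := Finset.card_le_card hKsub
    rw [hKcard, Finset.card_range] at this
    omega
  constructor
  · rw [hm]; exact h2m
  have hterm : ∀ p ∈ Finset.range (L + 1),
      (Polynomial.X : Polynomial ℚ) ^ extPeaksList (w.insertIdx p M) =
        if p ∈ K then Polynomial.X ^ pw.card else Polynomial.X ^ (pw.card + 1) := by
    intro p hp
    rw [Finset.mem_range] at hp
    rw [extPeaks_insertIdx w M p (by omega) hM]
    split <;> rfl
  rw [Finset.sum_congr rfl hterm, hm]
  rw [← Finset.sum_filter_add_sum_filter_not (Finset.range (L + 1)) (· ∈ K)]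
  have hfil : (Finset.range (L + 1)).filter (· ∈ K) = K := by
    rw [Finset.filter_mem_eq_inter, Finset.inter_eq_right.mpr hKsub]
  have hfil2 : ((Finset.range (L + 1)).filter (fun p => ¬ p ∈ K)).card = L - 2 * pw.card := by
    have h := Finset.card_filter_add_card_filter_not
      (s := Finset.range (L + 1)) (p := (· ∈ K))
    rw [hfil, hKcard, Finset.card_range] at h
    omega
  rw [hfil]
  have e1 : (∑ x ∈ K, if x ∈ K then (Polynomial.X : Polynomial ℚ) ^ pw.card
      else Polynomial.X ^ (pw.card + 1)) = K.card • Polynomial.X ^ pw.card := by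
    rw [Finset.sum_congr rfl (fun x hx => if_pos hx), Finset.sum_const]
  have e2 : (∑ x ∈ (Finset.range (L + 1)).filter (fun x => x ∉ K),
      if x ∈ K then (Polynomial.X : Polynomial ℚ) ^ pw.card
      else Polynomial.X ^ (pw.card + 1)) =
      ((Finset.range (L + 1)).filter (fun x => x ∉ K)).card • Polynomial.X ^ (pw.card + 1) := by
    rw [Finset.sum_congr rfl (fun x hx => if_neg (Finset.mem_filter.mp hx).2), Finset.sum_const]
  rw [e1, e2, hfil2, hKcard]
  simp [nsmul_eq_mul]

lemma extPeaksList_le (l : List ℕ) : extPeaksList l ≤ l.length := by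
  rw [extPeaksList_eq_card]
  calc (peakSet l).card ≤ (Finset.range l.length).card := Finset.card_filter_le _ _
  _ = l.length := Finset.card_range _

lemma extPeakCount_eq {n k : ℕ} :
    extPeakCount n k = (Finset.univ.filter (fun π : Equiv.Perm (Fin n) => extPeaks π = k)).card := by
  rw [extPeakCount, Nat.card_eq_fintype_card, Fintype.card_subtype]

lemma Tpoly_eq_sum (n : ℕ) :
    Tpoly n = ∑ π : Equiv.Perm (Fin n), (Polynomial.X : Polynomial ℚ) ^ extPeaks π := by
  cases n with
  | zero =>
    rw [Tpoly]
    rw [Finset.sum_eq_single_of_mem (1 : Equiv.Perm (Fin 0)) (Finset.mem_univ _)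
      (fun b _ _ => absurd (Subsingleton.elim b 1) (by tauto))]
    have : extPeaks (1 : Equiv.Perm (Fin 0)) = 0 := rfl
    rw [this, pow_zero]
  | succ m =>
    rw [Tpoly]
    have hmaps : ∀ π : Equiv.Perm (Fin (m+1)), π ∈ Finset.univ →
        extPeaks π ∈ Finset.range (m + 2) := by
      intro π _
      rw [Finset.mem_range, extPeaks]
      have := extPeaksList_le (List.ofFn fun i => (π i : ℕ))
      rw [List.length_ofFn] at this
      omega
    rw [← Finset.sum_fiberwise_of_maps_to hmaps (fun π => (Polynomial.X : Polynomial ℚ) ^ extPeaks π)]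
    refine Finset.sum_congr rfl (fun k _ => ?_)
    rw [extPeakCount_eq]
    rw [Finset.sum_congr rfl (fun π hπ => by rw [(Finset.mem_filter.mp hπ).2])]
    rw [Finset.sum_const, nsmul_eq_mul]

def insPerm {n : ℕ} (σ : Equiv.Perm (Fin n)) (p : Fin (n+1)) : Fin (n+1) → Fin (n+1) :=
  fun q =>
    if h1 : (q : ℕ) < (p : ℕ) then
      Fin.castSucc (σ ⟨q, by have := p.isLt; omega⟩)
    else if h2 : (q : ℕ) = (p : ℕ) then Fin.last n
    else Fin.castSucc (σ ⟨(q : ℕ) - 1, by have := q.isLt; omega⟩)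

lemma insPerm_injective {n : ℕ} (σ : Equiv.Perm (Fin n)) (p : Fin (n+1)) :
    Function.Injective (insPerm σ p) := by
  intro a b hab
  unfold insPerm at hab
  have ha := a.isLt
  have hb := b.isLt
  have hp := p.isLt
  apply Fin.ext
  split_ifs at hab with h1 h2 h3 h4 h5 h6 h7 h8
  all_goals try exact absurd hab (Fin.castSucc_lt_last _).ne
  all_goals try exact absurd hab.symm (Fin.castSucc_lt_last _).ne
  all_goals try omega
  all_goals
    (have h := σ.injective (Fin.castSucc_injective n hab)
     have h2 := congrArg Fin.val h
     simp only [] at h2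
     omega)

noncomputable def insEquiv {n : ℕ} (σ : Equiv.Perm (Fin n)) (p : Fin (n+1)) :
    Equiv.Perm (Fin (n+1)) :=
  Equiv.ofBijective _
    ((Fintype.bijective_iff_injective_and_card _).mpr ⟨insPerm_injective σ p, rfl⟩)

lemma word_insEquiv {n : ℕ} (σ : Equiv.Perm (Fin n)) (p : Fin (n+1)) :
    (List.ofFn fun q => ((insEquiv σ p) q : ℕ)) =
      List.insertIdx (List.ofFn fun i => (σ i : ℕ)) p n := by
  have hlen : (List.ofFn fun i => ((σ i : ℕ))).length = n := List.length_ofFn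
  have hple : (p : ℕ) ≤ n := Nat.lt_succ_iff.mp p.isLt
  apply List.ext_getElem
  · rw [List.length_ofFn, List.length_insertIdx_of_le_length (by rw [hlen]; exact hple), hlen]
  · intro q h1 h2
    rw [List.getElem_ofFn]
    show (insPerm σ p ⟨q, _⟩ : ℕ) = _
    unfold insPerm
    simp only [Fin.val_mk]
    rw [List.length_ofFn] at h1
    rcases lt_trichotomy q (p : ℕ) with hq | hq | hq
    · rw [dif_pos hq, List.getElem_insertIdx_of_lt hq h2, List.getElem_ofFn]
      rfl
    · rw [dif_neg (by omega), dif_pos hq]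
      subst hq
      rw [List.getElem_insertIdx_self h2]
      rfl
    · obtain ⟨k, rfl⟩ : ∃ k, q = (p : ℕ) + k + 1 := ⟨q - (p : ℕ) - 1, by omega⟩
      rw [dif_neg (by omega), dif_neg (by omega),
        List.getElem_insertIdx_add_succ _ _ _ k (by rw [hlen]; omega), List.getElem_ofFn]
      rfl

lemma insEquiv_bijective (n : ℕ) :
    Function.Bijective (fun x : Equiv.Perm (Fin n) × Fin (n+1) => insEquiv x.1 x.2) := by
  rw [Fintype.bijective_iff_injective_and_card]
  constructor
  · rintro ⟨σ, p⟩ ⟨σ', p'⟩ h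
    simp only at h
    have happ : ∀ q, insPerm σ p q = insPerm σ' p' q := by
      intro q
      have := DFunLike.congr_fun h q
      exact this
    have hpp : p = p' := by
      by_contra hne
      have hne' : (p : ℕ) ≠ (p' : ℕ) := fun hc => hne (Fin.ext hc)
      rcases lt_or_gt_of_ne hne' with hlt | hlt
      · have := happ p
        rw [insPerm, insPerm, dif_neg (by omega), dif_pos rfl, dif_pos hlt] at this
        exact absurd this.symm (Fin.castSucc_lt_last _).ne
      · have := happ p'
        rw [insPerm, insPerm, dif_pos hlt, dif_neg (by omega), dif_pos rfl] at this
        exact absurd this (Fin.castSucc_lt_last _).ne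
    subst hpp
    have hσ : σ = σ' := by
      apply Equiv.ext
      intro i
      rcases lt_or_ge (i : ℕ) (p : ℕ) with hi | hi
      · have hq := happ (Fin.castSucc i)
        simp only [insPerm, Fin.coe_castSucc, Fin.eta] at hq
        rw [dif_pos hi, dif_pos hi] at hq
        exact Fin.castSucc_injective n hq
      · have hq := happ i.succ
        simp only [insPerm, Fin.val_succ, Nat.add_sub_cancel, Fin.eta] at hq
        rw [dif_neg (by omega), dif_neg (by omega), dif_neg (by omega),
          dif_neg (by omega)] at hq
        exact Fin.castSucc_injective n hq
    rw [hσ]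
  · simp [Fintype.card_perm, Fintype.card_fin, Nat.factorial_succ]
    ring

open Polynomial in
lemma alg_aux (m k : ℕ) (h : 2*m ≤ k) :
    ((2*m+1 : ℕ) : Polynomial ℚ) * X^m + ((k - 2*m : ℕ) : Polynomial ℚ) * X^(m+1) =
      (1 + (k : Polynomial ℚ)*X) * X^m + 2*X*(1-X) * derivative (X^m : Polynomial ℚ) := by
  rw [Polynomial.derivative_X_pow, Nat.cast_sub h]
  cases m with
  | zero => push_cast; simp
  | succ j =>
    rw [Nat.add_sub_cancel, map_natCast]
    push_cast
    ring

open Polynomial in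
lemma Tpoly_rec (n : ℕ) :
    Tpoly (n+1) = (1 + (n : Polynomial ℚ) * X) * Tpoly n
      + 2 * X * (1 - X) * derivative (Tpoly n) := by
  rw [Tpoly_eq_sum (n+1), Tpoly_eq_sum n]
  rw [← Fintype.sum_bijective (fun x : Equiv.Perm (Fin n) × Fin (n+1) => insEquiv x.1 x.2)
    (insEquiv_bijective n)
    (fun x => (X : Polynomial ℚ) ^ extPeaks (insEquiv x.1 x.2))
    (fun τ => (X : Polynomial ℚ) ^ extPeaks τ) (fun x => rfl)]
  rw [Fintype.sum_prod_type]
  rw [derivative_sum, Finset.mul_sum, Finset.mul_sum, ← Finset.sum_add_distrib]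
  refine Finset.sum_congr rfl (fun σ _ => ?_)
  set w := List.ofFn (fun i => ((σ i : ℕ))) with hw
  have hwlen : w.length = n := List.length_ofFn
  have hM : ∀ x ∈ w, x < n := by
    intro x hx
    rw [hw, List.mem_ofFn] at hx
    obtain ⟨i, rfl⟩ := hx
    exact (σ i).isLt
  have hterm : ∀ p : Fin (n+1),
      (X : Polynomial ℚ) ^ extPeaks (insEquiv σ p) = X ^ extPeaksList (w.insertIdx p n) := by
    intro p
    rw [extPeaks, word_insEquiv]
  rw [Finset.sum_congr rfl (fun p _ => hterm p)]
  have hsum := sum_insertIdx_pow w n hM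
  obtain ⟨h2m, hsum⟩ := hsum
  rw [hwlen] at hsum h2m
  have : ∑ p : Fin (n+1), (X : Polynomial ℚ) ^ extPeaksList (w.insertIdx (p : ℕ) n) =
      ∑ p ∈ Finset.range (n+1), (X : Polynomial ℚ) ^ extPeaksList (w.insertIdx p n) :=
    Fin.sum_univ_eq_sum_range
      (fun p => (X : Polynomial ℚ) ^ extPeaksList (w.insertIdx p n)) (n+1)
  rw [this, hsum]
  have hm : extPeaks σ = extPeaksList w := rfl
  rw [hm]
  exact alg_aux _ _ h2m

open Polynomial

noncomputable def Dpoly (j : ℕ) : Polynomial ℚ := (-1)^j * (1 - X)^(j/2)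

noncomputable def Spoly (n : ℕ) : Polynomial ℚ :=
  ∑ j ∈ Finset.range (n+1), (n.choose j : Polynomial ℚ) * (Dpoly j * Tpoly (n - j))

lemma upow_deriv (k : ℕ) :
    (1 - X : Polynomial ℚ) * derivative ((1 - X : Polynomial ℚ)^k)
      = -(k : Polynomial ℚ) * (1 - X)^k := by
  cases k with
  | zero => simp
  | succ j =>
    rw [derivative_pow, map_natCast]
    have h1 : derivative (1 - X : Polynomial ℚ) = -1 := by simp
    rw [h1, Nat.add_sub_cancel, pow_succ]
    push_cast
    ring

lemma Dpoly_deriv (j : ℕ) :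
    (1 - X : Polynomial ℚ) * derivative (Dpoly j)
      = -((j/2 : ℕ) : Polynomial ℚ) * Dpoly j := by
  rw [Dpoly, show ((-1 : Polynomial ℚ)^j) = C ((-1 : ℚ)^j) by rw [map_pow, map_neg, map_one],
    derivative_C_mul]
  have := upow_deriv (j/2)
  calc (1 - X) * (C ((-1:ℚ)^j) * derivative ((1 - X : Polynomial ℚ)^(j/2)))
      = C ((-1:ℚ)^j) * ((1 - X) * derivative ((1 - X : Polynomial ℚ)^(j/2))) := by ring
    _ = C ((-1:ℚ)^j) * (-((j/2 : ℕ) : Polynomial ℚ) * (1 - X)^(j/2)) := by rw [this]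
    _ = -((j/2 : ℕ) : Polynomial ℚ) * (C ((-1:ℚ)^j) * (1 - X)^(j/2)) := by ring

lemma Dpoly_succ (j : ℕ) :
    Dpoly (j+1) = -(1 - ((j % 2 : ℕ) : Polynomial ℚ) * X) * Dpoly j := by
  rcases Nat.even_or_odd j with ⟨a, rfl⟩ | ⟨a, rfl⟩
  · have h1 : (a + a) / 2 = a := by omega
    have h2 : (a + a + 1) / 2 = a := by omega
    have h3 : (a + a) % 2 = 0 := by omega
    rw [Dpoly, Dpoly, h1, h2, h3, pow_succ]
    push_cast
    ring
  · have h1 : (2*a + 1) / 2 = a := by omega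
    have h2 : (2*a + 1 + 1) / 2 = a + 1 := by omega
    have h3 : (2*a + 1) % 2 = 1 := by omega
    rw [Dpoly, Dpoly, h1, h2, h3, pow_succ, pow_succ (1 - X : Polynomial ℚ)]
    push_cast
    ring

lemma term_id (j m : ℕ) :
    Dpoly j * Tpoly (m+1) + Dpoly (j+1) * Tpoly m
      = ((j + m : ℕ) : Polynomial ℚ) * X * (Dpoly j * Tpoly m)
        + 2*X*(1-X) * derivative (Dpoly j * Tpoly m) := by
  rw [Tpoly_rec m, derivative_mul, Dpoly_succ j]
  have hcast : ((j % 2 : ℕ) : Polynomial ℚ) + 2 * ((j / 2 : ℕ) : Polynomial ℚ)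
      = (j : Polynomial ℚ) := by
    have h : j % 2 + 2 * (j / 2) = j := by omega
    calc ((j % 2 : ℕ) : Polynomial ℚ) + 2 * ((j / 2 : ℕ) : Polynomial ℚ)
        = ((j % 2 + 2 * (j / 2) : ℕ) : Polynomial ℚ) := by push_cast; ring
      _ = (j : Polynomial ℚ) := by rw [h]
  have hD := Dpoly_deriv j
  push_cast
  linear_combination (-2 * X * Tpoly m) * hD
    + (X * Dpoly j * Tpoly m) * hcast

lemma Spoly_rec (n : ℕ) :
    Spoly (n+1) = (n : Polynomial ℚ) * X * Spoly n + 2*X*(1-X) * derivative (Spoly n) := by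
  set g : ℕ → Polynomial ℚ := fun j => (n.choose j : Polynomial ℚ) * (Dpoly j * Tpoly (n+1-j))
    with hg
  have hA : ∑ j ∈ Finset.range (n+2), g j
      = ∑ j ∈ Finset.range (n+1),
          (n.choose j : Polynomial ℚ) * (Dpoly j * Tpoly (n-j+1)) := by
    rw [Finset.sum_range_succ]
    have h0 : g (n+1) = 0 := by simp [hg, Nat.choose_succ_self]
    rw [h0, add_zero]
    refine Finset.sum_congr rfl (fun j hj => ?_)
    rw [Finset.mem_range] at hj
    show (n.choose j : Polynomial ℚ) * (Dpoly j * Tpoly (n+1-j)) = _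
    have : n + 1 - j = n - j + 1 := by omega
    rw [this]
  have hA' : ∑ j ∈ Finset.range (n+2), g j
      = (∑ j ∈ Finset.range (n+1),
          (n.choose (j+1) : Polynomial ℚ) * (Dpoly (j+1) * Tpoly (n-j))) + Tpoly (n+1) := by
    rw [Finset.sum_range_succ']
    congr 1
    · refine Finset.sum_congr rfl (fun j hj => ?_)
      show ((n.choose (j+1) : ℕ) : Polynomial ℚ) * (Dpoly (j+1) * Tpoly (n+1-(j+1))) = _
      have : n + 1 - (j+1) = n - j := by omega
      rw [this]
    · simp [hg, Dpoly]
  have hsplit : Spoly (n+1)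
      = (∑ j ∈ Finset.range (n+1), (n.choose j : Polynomial ℚ) * (Dpoly j * Tpoly (n-j+1)))
        + ∑ j ∈ Finset.range (n+1), (n.choose j : Polynomial ℚ) * (Dpoly (j+1) * Tpoly (n-j)) := by
    rw [Spoly, Finset.sum_range_succ']
    have h1 : ∀ j ∈ Finset.range (n+1),
        (((n+1).choose (j+1) : ℕ) : Polynomial ℚ) * (Dpoly (j+1) * Tpoly (n+1-(j+1)))
          = (n.choose (j+1) : Polynomial ℚ) * (Dpoly (j+1) * Tpoly (n-j))
            + (n.choose j : Polynomial ℚ) * (Dpoly (j+1) * Tpoly (n-j)) := by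
      intro j hj
      have he : n+1-(j+1) = n-j := by omega
      rw [he, Nat.choose_succ_succ]
      push_cast
      ring
    rw [Finset.sum_congr rfl h1, Finset.sum_add_distrib]
    have h0 : (((n+1).choose 0 : ℕ) : Polynomial ℚ) * (Dpoly 0 * Tpoly (n+1-0)) = Tpoly (n+1) := by
      simp [Dpoly]
    rw [h0]
    have hAc : (∑ j ∈ Finset.range (n+1),
        (n.choose j : Polynomial ℚ) * (Dpoly j * Tpoly (n-j+1)))
        = (∑ j ∈ Finset.range (n+1),
            (n.choose (j+1) : Polynomial ℚ) * (Dpoly (j+1) * Tpoly (n-j))) + Tpoly (n+1) := by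
      rw [← hA, hA']
    rw [hAc]
    ring
  rw [hsplit, ← Finset.sum_add_distrib, Spoly, derivative_sum, Finset.mul_sum, Finset.mul_sum,
    ← Finset.sum_add_distrib]
  refine Finset.sum_congr rfl (fun j hj => ?_)
  rw [Finset.mem_range] at hj
  have hji : j + (n - j) = n := by omega
  have ht := term_id j (n - j)
  rw [hji] at ht
  have hder : derivative ((n.choose j : Polynomial ℚ) * (Dpoly j * Tpoly (n-j)))
      = (n.choose j : Polynomial ℚ) * derivative (Dpoly j * Tpoly (n-j)) := by
    rw [← Polynomial.C_eq_natCast, derivative_C_mul]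
  rw [hder]
  linear_combination (n.choose j : Polynomial ℚ) * ht

lemma Spoly_zero : Spoly 0 = 1 := by
  rw [Spoly]
  simp [Dpoly]
  rfl

lemma Spoly_eq_zero (n : ℕ) (hn : 1 ≤ n) : Spoly n = 0 := by
  induction n with
  | zero => omega
  | succ m ih =>
    rcases Nat.eq_zero_or_pos m with rfl | hm
    · rw [Spoly_rec 0, Spoly_zero]
      simp
    · rw [Spoly_rec m, ih hm]
      simp


theorem stmt13 (n : ℕ) (hn : 1 ≤ n) :
    Tpoly n =
      ∑ j ∈ Finset.Icc 1 n,
        (n.choose j : Polynomial ℚ) * (-1) ^ (j - 1) * (1 - Polynomial.X) ^ (j / 2) *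
          Tpoly (n - j) := by
  have hS := Spoly_eq_zero n hn
  rw [Spoly] at hS
  have hins : Finset.range (n+1) = insert 0 (Finset.Icc 1 n) := by
    ext x
    simp only [Finset.mem_range, Finset.mem_insert, Finset.mem_Icc]
    omega
  rw [hins, Finset.sum_insert (by simp)] at hS
  have h0 : ((n.choose 0 : ℕ) : Polynomial ℚ) * (Dpoly 0 * Tpoly (n - 0)) = Tpoly n := by
    simp [Dpoly]
  rw [h0] at hS
  have hT : Tpoly n
      = ∑ j ∈ Finset.Icc 1 n, -((n.choose j : Polynomial ℚ) * (Dpoly j * Tpoly (n-j))) := by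
    rw [Finset.sum_neg_distrib]
    linear_combination hS
  rw [hT]
  refine Finset.sum_congr rfl (fun j hj => ?_)
  rw [Finset.mem_Icc] at hj
  obtain ⟨i, rfl⟩ : ∃ i, j = i + 1 := ⟨j - 1, by omega⟩
  rw [Dpoly, Nat.add_sub_cancel, pow_succ]
  ring
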